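/- In a deterministic quadrilocal (square-network, independent sources) model for four parties A,B,C,D with hidden variables α (B–C), β (C–D), γ (D–A), δ (A–B), if the behaviour satisfies p(A_D = D_A) = 1 and p(C_D = D_C) = 1, then the conditional distribution p(a_B,b_A,b_C,c_B | a_D,c_D) admits a bilocal decomposition: p(a_B,b_A,b_C,c_B|a_D,c_D) = Σ_{α,δ} p(α)p(δ) p(a_B|a_D,δ) p(b_A,b_C|α,δ) p(c_B|c_D,α). -/
import Mathlib

open Finset

lemma sqnet_pull1 {X : Type*} [Fintype X] (f : Fin 2 → X → ℝ) :
    ∑ a, ∑ x, f a x = ∑ x, ∑ a, f a x := Finset.sum_comm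

lemma sqnet_pull2 {X : Type*} [Fintype X] (f : Fin 2 → Fin 2 → X → ℝ) :
    ∑ a, ∑ b, ∑ x, f a b x = ∑ x, ∑ a, ∑ b, f a b x := by
  rw [show (∑ a, ∑ b, ∑ x, f a b x) = ∑ a, ∑ x, ∑ b, f a b x from
    Finset.sum_congr rfl fun a _ => sqnet_pull1 (f a)]
  exact Finset.sum_comm

lemma sqnet_pull3 {X : Type*} [Fintype X] (f : Fin 2 → Fin 2 → Fin 2 → X → ℝ) :
    ∑ a, ∑ b, ∑ c, ∑ x, f a b c x = ∑ x, ∑ a, ∑ b, ∑ c, f a b c x := by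
  rw [show (∑ a, ∑ b, ∑ c, ∑ x, f a b c x) = ∑ a, ∑ x, ∑ b, ∑ c, f a b c x from
    Finset.sum_congr rfl fun a _ => sqnet_pull2 (f a)]
  exact Finset.sum_comm

lemma sqnet_pull4 {X : Type*} [Fintype X] (f : Fin 2 → Fin 2 → Fin 2 → Fin 2 → X → ℝ) :
    ∑ a, ∑ b, ∑ c, ∑ d, ∑ x, f a b c d x = ∑ x, ∑ a, ∑ b, ∑ c, ∑ d, f a b c d x := by
  rw [show (∑ a, ∑ b, ∑ c, ∑ d, ∑ x, f a b c d x) = ∑ a, ∑ x, ∑ b, ∑ c, ∑ d, f a b c d x from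
    Finset.sum_congr rfl fun a _ => sqnet_pull3 (f a)]
  exact Finset.sum_comm

lemma sqnet_pull5 {X : Type*} [Fintype X] (f : Fin 2 → Fin 2 → Fin 2 → Fin 2 → Fin 2 → X → ℝ) :
    ∑ a, ∑ b, ∑ c, ∑ d, ∑ e, ∑ x, f a b c d e x
      = ∑ x, ∑ a, ∑ b, ∑ c, ∑ d, ∑ e, f a b c d e x := by
  rw [show (∑ a, ∑ b, ∑ c, ∑ d, ∑ e, ∑ x, f a b c d e x)
      = ∑ a, ∑ x, ∑ b, ∑ c, ∑ d, ∑ e, f a b c d e x from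
    Finset.sum_congr rfl fun a _ => sqnet_pull4 (f a)]
  exact Finset.sum_comm

lemma sqnet_pull6 {X : Type*} [Fintype X]
    (f : Fin 2 → Fin 2 → Fin 2 → Fin 2 → Fin 2 → Fin 2 → X → ℝ) :
    ∑ a, ∑ b, ∑ c, ∑ d, ∑ e, ∑ g, ∑ x, f a b c d e g x
      = ∑ x, ∑ a, ∑ b, ∑ c, ∑ d, ∑ e, ∑ g, f a b c d e g x := by
  rw [show (∑ a, ∑ b, ∑ c, ∑ d, ∑ e, ∑ g, ∑ x, f a b c d e g x)
      = ∑ a, ∑ x, ∑ b, ∑ c, ∑ d, ∑ e, ∑ g, f a b c d e g x from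
    Finset.sum_congr rfl fun a _ => sqnet_pull5 (f a)]
  exact Finset.sum_comm

lemma sqnet_pull7 {X : Type*} [Fintype X]
    (f : Fin 2 → Fin 2 → Fin 2 → Fin 2 → Fin 2 → Fin 2 → Fin 2 → X → ℝ) :
    ∑ a, ∑ b, ∑ c, ∑ d, ∑ e, ∑ g, ∑ h, ∑ x, f a b c d e g h x
      = ∑ x, ∑ a, ∑ b, ∑ c, ∑ d, ∑ e, ∑ g, ∑ h, f a b c d e g h x := by
  rw [show (∑ a, ∑ b, ∑ c, ∑ d, ∑ e, ∑ g, ∑ h, ∑ x, f a b c d e g h x)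
      = ∑ a, ∑ x, ∑ b, ∑ c, ∑ d, ∑ e, ∑ g, ∑ h, f a b c d e g h x from
    Finset.sum_congr rfl fun a _ => sqnet_pull6 (f a)]
  exact Finset.sum_comm

lemma sqnet_extract {X : Type*} [Fintype X] (p f : X → ℝ) (hp0 : ∀ x, 0 ≤ p x)
    (hp1 : ∑ x, p x = 1) (hf : ∀ x, f x ≤ 1) (h : ∑ x, p x * f x = 1) :
    ∀ x, 0 < p x → f x = 1 := by
  have h0 : ∑ x, p x * (1 - f x) = 0 := by
    simp only [mul_sub, mul_one, Finset.sum_sub_distrib, hp1, h, sub_self]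
  have hz := (Finset.sum_eq_zero_iff_of_nonneg
    (fun x _ => mul_nonneg (hp0 x) (by linarith [hf x]))).mp h0
  intro x hx
  have := hz x (Finset.mem_univ x)
  rcases mul_eq_zero.mp this with h' | h'
  · exact absurd h' (ne_of_gt hx)
  · linarith

lemma sqnet_exists_pos {X : Type*} [Fintype X] (p : X → ℝ) (hp0 : ∀ x, 0 ≤ p x)
    (hp1 : ∑ x, p x = 1) : ∃ x, 0 < p x := by
  by_contra h
  push_neg at h
  have : ∑ x, p x = 0 := Finset.sum_eq_zero fun x _ => le_antisymm (h x) (hp0 x)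
  rw [hp1] at this
  norm_num at this

set_option maxHeartbeats 4000000 in
theorem square_network_bilocal_decomposition
    {A B G D : Type*} [Fintype A] [Fintype B] [Fintype G] [Fintype D]
    (pA : A → ℝ) (pB : B → ℝ) (pG : G → ℝ) (pD : D → ℝ)
    (hpA0 : ∀ α, 0 ≤ pA α) (hpA1 : ∑ α, pA α = 1)
    (hpB0 : ∀ β, 0 ≤ pB β) (hpB1 : ∑ β, pB β = 1)
    (hpG0 : ∀ γ, 0 ≤ pG γ) (hpG1 : ∑ γ, pG γ = 1)
    (hpD0 : ∀ δ, 0 ≤ pD δ) (hpD1 : ∑ δ, pD δ = 1)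
    -- response kernels: Alice (a_B,a_D) from (γ,δ), Bob (b_A,b_C) from (α,δ),
    -- Charlie (c_B,c_D) from (α,β), Daisy (d_A,d_C) deterministic from (β,γ)
    (ra : G → D → Fin 2 → Fin 2 → ℝ) (rb : A → D → Fin 2 → Fin 2 → ℝ)
    (rc : A → B → Fin 2 → Fin 2 → ℝ) (rd : B → G → Fin 2 × Fin 2)
    (hra0 : ∀ γ δ aB aD, 0 ≤ ra γ δ aB aD) (hra1 : ∀ γ δ, ∑ aB, ∑ aD, ra γ δ aB aD = 1)
    (hrb0 : ∀ α δ bA bC, 0 ≤ rb α δ bA bC) (hrb1 : ∀ α δ, ∑ bA, ∑ bC, rb α δ bA bC = 1)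
    (hrc0 : ∀ α β cB cD, 0 ≤ rc α β cB cD) (hrc1 : ∀ α β, ∑ cB, ∑ cD, rc α β cB cD = 1)
    -- the full behaviour on the eight output bits
    (P : Fin 2 → Fin 2 → Fin 2 → Fin 2 → Fin 2 → Fin 2 → Fin 2 → Fin 2 → ℝ)
    (hP : ∀ aB aD bA bC cB cD dA dC, P aB aD bA bC cB cD dA dC =
      ∑ α, ∑ β, ∑ γ, ∑ δ, pA α * pB β * pG γ * pD δ *
        ra γ δ aB aD * rb α δ bA bC * rc α β cB cD *
        (if rd β γ = (dA, dC) then 1 else 0))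
    -- consistency conditions p(A_D = D_A) = 1 and p(C_D = D_C) = 1
    (hconsA : ∑ aB, ∑ aD, ∑ bA, ∑ bC, ∑ cB, ∑ cD, ∑ dA, ∑ dC,
      (if aD = dA then P aB aD bA bC cB cD dA dC else 0) = 1)
    (hconsC : ∑ aB, ∑ aD, ∑ bA, ∑ bC, ∑ cB, ∑ cD, ∑ dA, ∑ dC,
      (if cD = dC then P aB aD bA bC cB cD dA dC else 0) = 1)
    -- marginals
    (P6 : Fin 2 → Fin 2 → Fin 2 → Fin 2 → Fin 2 → Fin 2 → ℝ)
    (hP6 : ∀ aB aD bA bC cB cD, P6 aB aD bA bC cB cD =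
      ∑ dA, ∑ dC, P aB aD bA bC cB cD dA dC)
    (pADCD : Fin 2 → Fin 2 → ℝ)
    (hpADCD : ∀ aD cD, pADCD aD cD = ∑ aB, ∑ bA, ∑ bC, ∑ cB, P6 aB aD bA bC cB cD)
    (pAD pCD : Fin 2 → ℝ)
    (hpAD : ∀ aD, pAD aD = ∑ cD, pADCD aD cD)
    (hpCD : ∀ cD, pCD cD = ∑ aD, pADCD aD cD) :
    ∃ F : Fin 2 → Fin 2 → D → ℝ, ∃ Hc : Fin 2 → Fin 2 → A → ℝ,
      (∀ aD δ, (∀ aB, 0 ≤ F aB aD δ) ∧ ∑ aB, F aB aD δ = 1) ∧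
      (∀ cD α, (∀ cB, 0 ≤ Hc cB cD α) ∧ ∑ cB, Hc cB cD α = 1) ∧
      ∀ aB bA bC cB aD cD, 0 < pAD aD → 0 < pCD cD →
        P6 aB aD bA bC cB cD / pADCD aD cD =
          ∑ α, ∑ δ, pA α * pD δ * F aB aD δ * rb α δ bA bC * Hc cB cD α := by
  classical
  obtain ⟨β0, hβ0⟩ := sqnet_exists_pos pB hpB0 hpB1
  obtain ⟨γ0, hγ0⟩ := sqnet_exists_pos pG hpG0 hpG1
  -- ### Step 1: consistency condition A forces a_D to be deterministic
  have hsA : ∀ β γ δ, 0 < pB β → 0 < pG γ → 0 < pD δ →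
      ∑ aB, ra γ δ aB ((rd β γ).1) = 1 := by
    simp (config := { maxSteps := 10000000 }) only [hP] at hconsA
    have hcol : ∀ (f : Fin 2 → Fin 2 → ℝ) (x : Fin 2),
        (∑ dA, ∑ dC, if x = dA then f dA dC else 0) = ∑ dC, f x dC := by
      intro f x; fin_cases x <;> simp [Fin.sum_univ_two]
    simp only [hcol] at hconsA
    simp only [sqnet_pull7] at hconsA
    have inner7 : ∀ α β γ δ, (∑ a : Fin 2, ∑ b : Fin 2, ∑ c : Fin 2, ∑ d : Fin 2,
        ∑ e : Fin 2, ∑ g : Fin 2, ∑ h : Fin 2,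
        pA α * pB β * pG γ * pD δ * ra γ δ a b * rb α δ c d * rc α β e g *
          (if rd β γ = (b, h) then 1 else 0))
        = ∑ aB, pA α * (pB β * (pG γ * (pD δ * ra γ δ aB ((rd β γ).1)))) := by
      intro α β γ δ
      have hb := hrb1 α δ; have hc := hrc1 α β
      rcases h : rd β γ with ⟨x, y⟩
      simp only [Fin.sum_univ_two, h] at hb hc ⊢
      fin_cases x <;> fin_cases y <;>
        simp (config := { decide := true }) [Prod.mk.injEq, Fin.mk_zero, Fin.mk_one,
          Fin.ext_iff] <;>
        first
        | (linear_combination (pA α * pB β * pG γ * pD δ * (ra γ δ 0 0 + ra γ δ 1 0) *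
              (rb α δ 0 0 + rb α δ 0 1 + rb α δ 1 0 + rb α δ 1 1)) * hc +
            (pA α * pB β * pG γ * pD δ * (ra γ δ 0 0 + ra γ δ 1 0)) * hb)
        | (linear_combination (pA α * pB β * pG γ * pD δ * (ra γ δ 0 1 + ra γ δ 1 1) *
              (rb α δ 0 0 + rb α δ 0 1 + rb α δ 1 0 + rb α δ 1 1)) * hc +
            (pA α * pB β * pG γ * pD δ * (ra γ δ 0 1 + ra γ δ 1 1)) * hb)
    have h1 : ∑ α, pA α * (∑ β, pB β * (∑ γ, pG γ * (∑ δ, pD δ *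
        (∑ aB, ra γ δ aB ((rd β γ).1))))) = 1 := by
      rw [← hconsA]
      simp only [Finset.mul_sum]
      exact Finset.sum_congr rfl fun α _ => Finset.sum_congr rfl fun β _ =>
        Finset.sum_congr rfl fun γ _ => Finset.sum_congr rfl fun δ _ => (inner7 α β γ δ).symm
    have h2 : ∑ β, pB β * (∑ γ, pG γ * (∑ δ, pD δ * (∑ aB, ra γ δ aB ((rd β γ).1)))) = 1 := by
      calc (∑ β, pB β * (∑ γ, pG γ * (∑ δ, pD δ * (∑ aB, ra γ δ aB ((rd β γ).1)))))
          = (∑ α, pA α) * (∑ β, pB β * (∑ γ, pG γ * (∑ δ, pD δ *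
              (∑ aB, ra γ δ aB ((rd β γ).1))))) := by rw [hpA1, one_mul]
        _ = ∑ α, pA α * (∑ β, pB β * (∑ γ, pG γ * (∑ δ, pD δ *
              (∑ aB, ra γ δ aB ((rd β γ).1))))) := Finset.sum_mul ..
        _ = 1 := h1
    have bound1 : ∀ (β : B) (γ : G) (δ : D), (∑ aB, ra γ δ aB ((rd β γ).1)) ≤ 1 := by
      intro β γ δ
      calc (∑ aB, ra γ δ aB ((rd β γ).1)) ≤ ∑ aB, ∑ aD, ra γ δ aB aD :=
            Finset.sum_le_sum fun aB _ =>
              Finset.single_le_sum (fun i _ => hra0 γ δ aB i) (Finset.mem_univ _)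
        _ = 1 := hra1 γ δ
    have bound2 : ∀ (β : B) (γ : G), (∑ δ, pD δ * (∑ aB, ra γ δ aB ((rd β γ).1))) ≤ 1 := by
      intro β γ
      calc (∑ δ, pD δ * (∑ aB, ra γ δ aB ((rd β γ).1))) ≤ ∑ δ, pD δ * 1 :=
            Finset.sum_le_sum fun δ _ => mul_le_mul_of_nonneg_left (bound1 β γ δ) (hpD0 δ)
        _ = 1 := by simp [hpD1]
    have bound3 : ∀ (β : B), (∑ γ, pG γ * (∑ δ, pD δ * (∑ aB, ra γ δ aB ((rd β γ).1)))) ≤ 1 := by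
      intro β
      calc _ ≤ ∑ γ, pG γ * 1 :=
            Finset.sum_le_sum fun γ _ => mul_le_mul_of_nonneg_left (bound2 β γ) (hpG0 γ)
        _ = 1 := by simp [hpG1]
    intro β γ δ h1b h1g h1d
    have e1 := sqnet_extract pB _ hpB0 hpB1 bound3 h2 β h1b
    have e2 := sqnet_extract pG _ hpG0 hpG1 (fun γ => bound2 β γ) e1 γ h1g
    exact sqnet_extract pD _ hpD0 hpD1 (fun δ => bound1 β γ δ) e2 δ h1d
  -- ### Step 2: consistency condition C forces c_D to be deterministic
  have hsC : ∀ α β γ, 0 < pA α → 0 < pB β → 0 < pG γ →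
      ∑ cB, rc α β cB ((rd β γ).2) = 1 := by
    simp (config := { maxSteps := 10000000 }) only [hP] at hconsC
    have hcol : ∀ (f : Fin 2 → Fin 2 → ℝ) (x : Fin 2),
        (∑ dA, ∑ dC, if x = dC then f dA dC else 0) = ∑ dA, f dA x := by
      intro f x; fin_cases x <;> simp [Fin.sum_univ_two]
    simp only [hcol] at hconsC
    simp only [sqnet_pull7] at hconsC
    have inner7 : ∀ α β γ δ, (∑ a : Fin 2, ∑ b : Fin 2, ∑ c : Fin 2, ∑ d : Fin 2,
        ∑ e : Fin 2, ∑ g : Fin 2, ∑ h : Fin 2,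
        pA α * pB β * pG γ * pD δ * ra γ δ a b * rb α δ c d * rc α β e g *
          (if rd β γ = (h, g) then 1 else 0))
        = ∑ cB, pA α * (pB β * (pG γ * (pD δ * rc α β cB ((rd β γ).2)))) := by
      intro α β γ δ
      have hb := hrb1 α δ; have ha := hra1 γ δ
      rcases h : rd β γ with ⟨x, y⟩
      simp only [Fin.sum_univ_two, h] at hb ha ⊢
      fin_cases x <;> fin_cases y <;>
        simp (config := { decide := true }) [Prod.mk.injEq, Fin.mk_zero, Fin.mk_one,
          Fin.ext_iff] <;>
        first
        | (linear_combination (pA α * pB β * pG γ * pD δ * (rc α β 0 0 + rc α β 1 0) *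
              (ra γ δ 0 0 + ra γ δ 0 1 + ra γ δ 1 0 + ra γ δ 1 1)) * hb +
            (pA α * pB β * pG γ * pD δ * (rc α β 0 0 + rc α β 1 0)) * ha)
        | (linear_combination (pA α * pB β * pG γ * pD δ * (rc α β 0 1 + rc α β 1 1) *
              (ra γ δ 0 0 + ra γ δ 0 1 + ra γ δ 1 0 + ra γ δ 1 1)) * hb +
            (pA α * pB β * pG γ * pD δ * (rc α β 0 1 + rc α β 1 1)) * ha)
    have h1 : ∑ α, pA α * (∑ β, pB β * (∑ γ, pG γ * (∑ δ, pD δ *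
        (∑ cB, rc α β cB ((rd β γ).2))))) = 1 := by
      rw [← hconsC]
      simp only [Finset.mul_sum]
      exact Finset.sum_congr rfl fun α _ => Finset.sum_congr rfl fun β _ =>
        Finset.sum_congr rfl fun γ _ => Finset.sum_congr rfl fun δ _ => (inner7 α β γ δ).symm
    have hδout : ∀ (α : A) (β : B) (γ : G), (∑ δ, pD δ * (∑ cB, rc α β cB ((rd β γ).2)))
        = ∑ cB, rc α β cB ((rd β γ).2) := by
      intro α β γ; rw [← Finset.sum_mul, hpD1, one_mul]
    simp only [hδout] at h1
    have bound1 : ∀ (α : A) (β : B) (γ : G), (∑ cB, rc α β cB ((rd β γ).2)) ≤ 1 := by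
      intro α β γ
      calc (∑ cB, rc α β cB ((rd β γ).2)) ≤ ∑ cB, ∑ cD, rc α β cB cD :=
            Finset.sum_le_sum fun cB _ =>
              Finset.single_le_sum (fun i _ => hrc0 α β cB i) (Finset.mem_univ _)
        _ = 1 := hrc1 α β
    have bound2 : ∀ (α : A) (β : B), (∑ γ, pG γ * (∑ cB, rc α β cB ((rd β γ).2))) ≤ 1 := by
      intro α β
      calc _ ≤ ∑ γ, pG γ * 1 :=
            Finset.sum_le_sum fun γ _ => mul_le_mul_of_nonneg_left (bound1 α β γ) (hpG0 γ)
        _ = 1 := by simp [hpG1]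
    have bound3 : ∀ (α : A), (∑ β, pB β * (∑ γ, pG γ * (∑ cB, rc α β cB ((rd β γ).2)))) ≤ 1 := by
      intro α
      calc _ ≤ ∑ β, pB β * 1 :=
            Finset.sum_le_sum fun β _ => mul_le_mul_of_nonneg_left (bound2 α β) (hpB0 β)
        _ = 1 := by simp [hpB1]
    intro α β γ h1a h1b h1g
    have e1 := sqnet_extract pA _ hpA0 hpA1 bound3 h1 α h1a
    have e2 := sqnet_extract pB _ hpB0 hpB1 (fun β => bound2 α β) e1 β h1b
    exact sqnet_extract pG _ hpG0 hpG1 (fun γ => bound1 α β γ) e2 γ h1g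
  -- ### Step 3: pointwise determinism of the a_D and c_D marginals
  have hqA : ∀ γ δ (aD : Fin 2), 0 < pG γ → 0 < pD δ →
      (∑ aB, ra γ δ aB aD) = if (rd β0 γ).1 = aD then 1 else 0 := by
    intro γ δ aD hγ hδ
    by_cases h : (rd β0 γ).1 = aD
    · rw [if_pos h, ← h]; exact hsA β0 γ δ hβ0 hγ hδ
    · rw [if_neg h]
      have h1 := hsA β0 γ δ hβ0 hγ hδ
      have hle : (∑ aB, ra γ δ aB aD) + (∑ aB, ra γ δ aB ((rd β0 γ).1)) ≤ 1 := by
        rw [← Finset.sum_add_distrib]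
        calc (∑ aB, (ra γ δ aB aD + ra γ δ aB ((rd β0 γ).1)))
            ≤ ∑ aB, ∑ aD', ra γ δ aB aD' := by
              refine Finset.sum_le_sum fun aB _ => ?_
              rw [← Finset.sum_pair (Ne.symm h)]
              exact Finset.sum_le_sum_of_subset_of_nonneg (Finset.subset_univ _)
                (fun i _ _ => hra0 γ δ aB i)
          _ = 1 := hra1 γ δ
      have hge : 0 ≤ ∑ aB, ra γ δ aB aD := Finset.sum_nonneg fun aB _ => hra0 γ δ aB aD
      linarith
  have hqC : ∀ α β (cD : Fin 2), 0 < pA α → 0 < pB β →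
      (∑ cB, rc α β cB cD) = if (rd β γ0).2 = cD then 1 else 0 := by
    intro α β cD hα hβ
    by_cases h : (rd β γ0).2 = cD
    · rw [if_pos h, ← h]; exact hsC α β γ0 hα hβ hγ0
    · rw [if_neg h]
      have h1 := hsC α β γ0 hα hβ hγ0
      have hle : (∑ cB, rc α β cB cD) + (∑ cB, rc α β cB ((rd β γ0).2)) ≤ 1 := by
        rw [← Finset.sum_add_distrib]
        calc (∑ cB, (rc α β cB cD + rc α β cB ((rd β γ0).2)))
            ≤ ∑ cB, ∑ cD', rc α β cB cD' := by
              refine Finset.sum_le_sum fun cB _ => ?_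
              rw [← Finset.sum_pair (Ne.symm h)]
              exact Finset.sum_le_sum_of_subset_of_nonneg (Finset.subset_univ _)
                (fun i _ _ => hrc0 α β cB i)
          _ = 1 := hrc1 α β
      have hge : 0 ≤ ∑ cB, rc α β cB cD := Finset.sum_nonneg fun cB _ => hrc0 α β cB cD
      linarith
  -- ### Step 4: sums of the effective response distributions
  have hRaM : ∀ (aD : Fin 2) δ, 0 < pD δ →
      (∑ aB, ∑ γ, pG γ * ra γ δ aB aD) = ∑ γ, pG γ * (if (rd β0 γ).1 = aD then 1 else 0) := by
    intro aD δ hδ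
    rw [Finset.sum_comm]
    refine Finset.sum_congr rfl fun γ _ => ?_
    rw [← Finset.mul_sum]
    rcases (hpG0 γ).eq_or_lt with h | h
    · rw [← h, zero_mul, zero_mul]
    · rw [hqA γ δ aD h hδ]
  have hRcM : ∀ (cD : Fin 2) α, 0 < pA α →
      (∑ cB, ∑ β, pB β * rc α β cB cD) = ∑ β, pB β * (if (rd β γ0).2 = cD then 1 else 0) := by
    intro cD α hα
    rw [Finset.sum_comm]
    refine Finset.sum_congr rfl fun β _ => ?_
    rw [← Finset.mul_sum]
    rcases (hpB0 β).eq_or_lt with h | h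
    · rw [← h, zero_mul, zero_mul]
    · rw [hqC α β cD hα h]
  -- ### Step 5: the six-output behaviour in product form
  have hE1 : ∀ aB aD bA bC cB cD, P6 aB aD bA bC cB cD =
      ∑ α, ∑ δ, pA α * pD δ * (∑ γ, pG γ * ra γ δ aB aD) * rb α δ bA bC *
        (∑ β, pB β * rc α β cB cD) := by
    intro aB aD bA bC cB cD
    rw [hP6]
    simp only [hP]
    have swapA : ∀ (f : Fin 2 → A → ℝ), ∑ x, ∑ y, f x y = ∑ y, ∑ x, f x y :=
      fun f => Finset.sum_comm
    have swapB : ∀ (f : Fin 2 → B → ℝ), ∑ x, ∑ y, f x y = ∑ y, ∑ x, f x y :=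
      fun f => Finset.sum_comm
    have swapG : ∀ (f : Fin 2 → G → ℝ), ∑ x, ∑ y, f x y = ∑ y, ∑ x, f x y :=
      fun f => Finset.sum_comm
    have swapD : ∀ (f : Fin 2 → D → ℝ), ∑ x, ∑ y, f x y = ∑ y, ∑ x, f x y :=
      fun f => Finset.sum_comm
    have swapBD : ∀ (f : B → D → ℝ), ∑ x, ∑ y, f x y = ∑ y, ∑ x, f x y :=
      fun f => Finset.sum_comm
    have swapGD : ∀ (f : G → D → ℝ), ∑ x, ∑ y, f x y = ∑ y, ∑ x, f x y :=
      fun f => Finset.sum_comm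
    have hind : ∀ (β : B) (γ : G) (K : ℝ),
        (∑ dA : Fin 2, ∑ dC : Fin 2, K * (if rd β γ = (dA, dC) then 1 else 0)) = K := by
      intro β γ K; rcases h : rd β γ with ⟨x, y⟩
      fin_cases x <;> fin_cases y <;> simp [Fin.sum_univ_two, Prod.ext_iff]
    simp only [swapA, swapB, swapG, swapD, hind, swapBD, swapGD]
    refine Finset.sum_congr rfl fun α _ => Finset.sum_congr rfl fun δ _ => ?_
    simp only [Finset.mul_sum, Finset.sum_mul]
    exact Finset.sum_congr rfl fun _ _ => Finset.sum_congr rfl fun _ _ => by ring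
  -- ### Step 6: factorisation of pADCD
  have hfact : ∀ aD cD, pADCD aD cD =
      (∑ δ, pD δ * (∑ aB, ∑ γ, pG γ * ra γ δ aB aD)) *
      (∑ α, pA α * (∑ cB, ∑ β, pB β * rc α β cB cD)) := by
    intro aD cD
    rw [hpADCD]
    simp only [hE1]
    simp only [sqnet_pull4]
    have inner : ∀ (α : A) (δ : D), (∑ aB : Fin 2, ∑ bA : Fin 2, ∑ bC : Fin 2, ∑ cB : Fin 2,
        pA α * pD δ * (∑ γ, pG γ * ra γ δ aB aD) * rb α δ bA bC *
          (∑ β, pB β * rc α β cB cD))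
        = (pD δ * (∑ aB, ∑ γ, pG γ * ra γ δ aB aD)) *
          (pA α * (∑ cB, ∑ β, pB β * rc α β cB cD)) := by
      intro α δ
      have hb := hrb1 α δ
      simp only [Fin.sum_univ_two] at hb ⊢
      linear_combination (pD δ * ((∑ γ, pG γ * ra γ δ 0 aD) + (∑ γ, pG γ * ra γ δ 1 aD)) *
        (pA α * ((∑ β, pB β * rc α β 0 cD) + (∑ β, pB β * rc α β 1 cD)))) * hb
    simp only [inner]
    rw [show (∑ α, ∑ δ, (pD δ * (∑ aB, ∑ γ, pG γ * ra γ δ aB aD)) *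
        (pA α * (∑ cB, ∑ β, pB β * rc α β cB cD)))
        = ∑ α, (∑ δ, pD δ * (∑ aB, ∑ γ, pG γ * ra γ δ aB aD)) *
          (pA α * (∑ cB, ∑ β, pB β * rc α β cB cD)) from
      Finset.sum_congr rfl fun α _ => by rw [← Finset.sum_mul]]
    rw [← Finset.mul_sum]
  -- ### Step 7: identification of the marginals
  have hQA : ∀ (aD : Fin 2), (∑ δ, pD δ * (∑ aB, ∑ γ, pG γ * ra γ δ aB aD))
      = ∑ γ, pG γ * (if (rd β0 γ).1 = aD then 1 else 0) := by
    intro aD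
    calc (∑ δ, pD δ * (∑ aB, ∑ γ, pG γ * ra γ δ aB aD))
        = ∑ δ, pD δ * (∑ γ, pG γ * (if (rd β0 γ).1 = aD then 1 else 0)) := by
          refine Finset.sum_congr rfl fun δ _ => ?_
          rcases (hpD0 δ).eq_or_lt with h | h
          · rw [← h, zero_mul, zero_mul]
          · rw [hRaM aD δ h]
      _ = _ := by rw [← Finset.sum_mul, hpD1, one_mul]
  have hQC : ∀ (cD : Fin 2), (∑ α, pA α * (∑ cB, ∑ β, pB β * rc α β cB cD))
      = ∑ β, pB β * (if (rd β γ0).2 = cD then 1 else 0) := by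
    intro cD
    calc (∑ α, pA α * (∑ cB, ∑ β, pB β * rc α β cB cD))
        = ∑ α, pA α * (∑ β, pB β * (if (rd β γ0).2 = cD then 1 else 0)) := by
          refine Finset.sum_congr rfl fun α _ => ?_
          rcases (hpA0 α).eq_or_lt with h | h
          · rw [← h, zero_mul, zero_mul]
          · rw [hRcM cD α h]
      _ = _ := by rw [← Finset.sum_mul, hpA1, one_mul]
  have hGsum : (∑ aD : Fin 2, ∑ γ, pG γ * (if (rd β0 γ).1 = aD then 1 else 0)) = 1 := by
    rw [Finset.sum_comm]
    calc (∑ γ, ∑ aD : Fin 2, pG γ * (if (rd β0 γ).1 = aD then 1 else 0))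
        = ∑ γ, pG γ := by
          refine Finset.sum_congr rfl fun γ _ => ?_
          rw [← Finset.mul_sum]
          simp [Finset.sum_ite_eq]
      _ = 1 := hpG1
  have hBsum : (∑ cD : Fin 2, ∑ β, pB β * (if (rd β γ0).2 = cD then 1 else 0)) = 1 := by
    rw [Finset.sum_comm]
    calc (∑ β, ∑ cD : Fin 2, pB β * (if (rd β γ0).2 = cD then 1 else 0))
        = ∑ β, pB β := by
          refine Finset.sum_congr rfl fun β _ => ?_
          rw [← Finset.mul_sum]
          simp [Finset.sum_ite_eq]
      _ = 1 := hpB1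
  have hpADv : ∀ aD, pAD aD = ∑ γ, pG γ * (if (rd β0 γ).1 = aD then 1 else 0) := by
    intro aD
    rw [hpAD]
    calc (∑ cD, pADCD aD cD)
        = ∑ cD, (∑ γ, pG γ * (if (rd β0 γ).1 = aD then 1 else 0)) *
            (∑ β, pB β * (if (rd β γ0).2 = cD then 1 else 0)) := by
          refine Finset.sum_congr rfl fun cD _ => ?_
          rw [hfact aD cD, hQA aD, hQC cD]
      _ = (∑ γ, pG γ * (if (rd β0 γ).1 = aD then 1 else 0)) *
            (∑ cD : Fin 2, ∑ β, pB β * (if (rd β γ0).2 = cD then 1 else 0)) := by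
          rw [← Finset.mul_sum]
      _ = _ := by rw [hBsum, mul_one]
  have hpCDv : ∀ cD, pCD cD = ∑ β, pB β * (if (rd β γ0).2 = cD then 1 else 0) := by
    intro cD
    rw [hpCD]
    calc (∑ aD, pADCD aD cD)
        = ∑ aD : Fin 2, (∑ γ, pG γ * (if (rd β0 γ).1 = aD then 1 else 0)) *
            (∑ β, pB β * (if (rd β γ0).2 = cD then 1 else 0)) := by
          refine Finset.sum_congr rfl fun aD _ => ?_
          rw [hfact aD cD, hQA aD, hQC cD]
      _ = (∑ aD : Fin 2, ∑ γ, pG γ * (if (rd β0 γ).1 = aD then 1 else 0)) *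
            (∑ β, pB β * (if (rd β γ0).2 = cD then 1 else 0)) := by
          rw [← Finset.sum_mul]
      _ = _ := by rw [hGsum, one_mul]
  have hfact2 : ∀ aD cD, pADCD aD cD = pAD aD * pCD cD := by
    intro aD cD
    rw [hfact aD cD, hQA aD, hQC cD, ← hpADv aD, ← hpCDv cD]
  -- ### Step 8: construction of the bilocal decomposition
  refine ⟨fun aB aD δ => if 0 < pAD aD ∧ 0 < pD δ
      then (∑ γ, pG γ * ra γ δ aB aD) / pAD aD else if aB = 0 then 1 else 0,
    fun cB cD α => if 0 < pCD cD ∧ 0 < pA α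
      then (∑ β, pB β * rc α β cB cD) / pCD cD else if cB = 0 then 1 else 0, ?_, ?_, ?_⟩
  · intro aD δ
    by_cases h : 0 < pAD aD ∧ 0 < pD δ
    · constructor
      · intro aB
        dsimp only
        rw [if_pos h]
        exact div_nonneg
          (Finset.sum_nonneg fun γ _ => mul_nonneg (hpG0 γ) (hra0 γ δ aB aD)) h.1.le
      · dsimp only
        simp only [if_pos h]
        rw [← Finset.sum_div, hRaM aD δ h.2, ← hpADv aD, div_self (ne_of_gt h.1)]
    · constructor
      · intro aB
        dsimp only
        rw [if_neg h]
        split <;> norm_num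
      · dsimp only
        simp only [if_neg h]
        simp [Fin.sum_univ_two]
  · intro cD α
    by_cases h : 0 < pCD cD ∧ 0 < pA α
    · constructor
      · intro cB
        dsimp only
        rw [if_pos h]
        exact div_nonneg
          (Finset.sum_nonneg fun β _ => mul_nonneg (hpB0 β) (hrc0 α β cB cD)) h.1.le
      · dsimp only
        simp only [if_pos h]
        rw [← Finset.sum_div, hRcM cD α h.2, ← hpCDv cD, div_self (ne_of_gt h.1)]
    · constructor
      · intro cB
        dsimp only
        rw [if_neg h]
        split <;> norm_num
      · dsimp only
        simp only [if_neg h]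
        simp [Fin.sum_univ_two]
  · intro aB bA bC cB aD cD hAD hCD
    rw [hE1 aB aD bA bC cB cD, hfact2 aD cD, eq_comm]
    calc (∑ α, ∑ δ, pA α * pD δ *
          (if 0 < pAD aD ∧ 0 < pD δ
            then (∑ γ, pG γ * ra γ δ aB aD) / pAD aD else if aB = 0 then 1 else 0) *
          rb α δ bA bC *
          (if 0 < pCD cD ∧ 0 < pA α
            then (∑ β, pB β * rc α β cB cD) / pCD cD else if cB = 0 then 1 else 0))
        = ∑ α, ∑ δ, pA α * pD δ * ((∑ γ, pG γ * ra γ δ aB aD) / pAD aD) * rb α δ bA bC *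
            ((∑ β, pB β * rc α β cB cD) / pCD cD) := by
          refine Finset.sum_congr rfl fun α _ => Finset.sum_congr rfl fun δ _ => ?_
          rcases (hpA0 α).eq_or_lt with h | h
          · rw [← h]; ring
          rcases (hpD0 δ).eq_or_lt with h2 | h2
          · rw [← h2]; ring
          rw [if_pos ⟨hAD, h2⟩, if_pos ⟨hCD, h⟩]
      _ = (∑ α, ∑ δ, pA α * pD δ * (∑ γ, pG γ * ra γ δ aB aD) * rb α δ bA bC *
            (∑ β, pB β * rc α β cB cD)) / (pAD aD * pCD cD) := by
          have h1 : pAD aD ≠ 0 := ne_of_gt hAD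
          have h2 : pCD cD ≠ 0 := ne_of_gt hCD
          conv_rhs => rw [Finset.sum_div]
          refine Finset.sum_congr rfl fun α _ => ?_
          conv_rhs => rw [Finset.sum_div]
          refine Finset.sum_congr rfl fun δ _ => ?_
          field_simp
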